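/- Let P₁, P₂, τ₁, τ₂ > 0 satisfy τ₁·(γ(P₁+P₂) − γ(P₁)) < τ₂·γ(P₁) and τ₂·(γ(P₁+P₂) − γ(P₂)) < τ₁·γ(P₂) (Case II), and set w₂ = γ(P₁)/γ(P₁+P₂), A = (γ(P₁+P₂) − γ(P₂), γ(P₂)), C = ((τ₁/(τ₁+τ₂))·γ(P₁+P₂), (τ₂/(τ₁+τ₂))·γ(P₁+P₂)). Let D₂(r₁, r₂) = w·τ₁/γ(P₁) + τ₂·(γ(P₁) − w·r₁)/(γ(P₁)·r₂). Then for every (r₁, r₂) ∈ C₁ with r₂ > 0 and τ₁·r₂ ≥ τ₂·r₁: if w ∈ [0, w₂] then D₂(A) ≤ D₂(r₁, r₂), and if w ∈ [w₂, 1] then D₂(C) ≤ D₂(r₁, r₂). -/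

import Mathlib

/-- γ(x) = (1/2)·log₂(1+x). -/
noncomputable def gam (x : ℝ) : ℝ := (1/2) * Real.logb 2 (1 + x)

/-- The standard two-user Gaussian MAC capacity region. -/
def C1 (P₁ P₂ : ℝ) : Set (ℝ × ℝ) :=
  {r : ℝ × ℝ | 0 ≤ r.1 ∧ r.1 ≤ gam P₁ ∧ 0 ≤ r.2 ∧ r.2 ≤ gam P₂ ∧
    r.1 + r.2 ≤ gam (P₁ + P₂)}

/-- D₂(r₁, r₂) = w·τ₁/γ(P₁) + τ₂·(γ(P₁) − w·r₁)/(γ(P₁)·r₂). -/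
noncomputable def D2 (w τ₁ τ₂ P₁ r₁ r₂ : ℝ) : ℝ :=
  w * τ₁ / gam P₁ + τ₂ * (gam P₁ - w * r₁) / (gam P₁ * r₂)

lemma gam_pos {x : ℝ} (hx : 0 < x) : 0 < gam x := by
  unfold gam
  have := Real.logb_pos (by norm_num : (1:ℝ) < 2) (by linarith : (1:ℝ) < 1 + x)
  linarith

theorem stmt_8 (P₁ P₂ τ₁ τ₂ w : ℝ) (hP₁ : 0 < P₁) (hP₂ : 0 < P₂)
    (hτ₁ : 0 < τ₁) (hτ₂ : 0 < τ₂)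
    (hcaseA : τ₁ * (gam (P₁ + P₂) - gam P₁) < τ₂ * gam P₁)
    (hcaseB : τ₂ * (gam (P₁ + P₂) - gam P₂) < τ₁ * gam P₂) :
    ∀ r₁ r₂ : ℝ, (r₁, r₂) ∈ C1 P₁ P₂ → 0 < r₂ → τ₂ * r₁ ≤ τ₁ * r₂ →
      (w ∈ Set.Icc (0:ℝ) (gam P₁ / gam (P₁ + P₂)) →
        D2 w τ₁ τ₂ P₁ (gam (P₁ + P₂) - gam P₂) (gam P₂) ≤ D2 w τ₁ τ₂ P₁ r₁ r₂) ∧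
      (w ∈ Set.Icc (gam P₁ / gam (P₁ + P₂)) 1 →
        D2 w τ₁ τ₂ P₁ ((τ₁ / (τ₁ + τ₂)) * gam (P₁ + P₂))
          ((τ₂ / (τ₁ + τ₂)) * gam (P₁ + P₂)) ≤ D2 w τ₁ τ₂ P₁ r₁ r₂) := by
  have hg1 : 0 < gam P₁ := gam_pos hP₁
  have hg2 : 0 < gam P₂ := gam_pos hP₂
  have hg12 : 0 < gam (P₁ + P₂) := gam_pos (by linarith)
  set g1 := gam P₁ with hg1d
  set g2 := gam P₂ with hg2d
  set g12 := gam (P₁ + P₂) with hg12d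
  clear_value g1 g2 g12
  intro r₁ r₂ hr hr2 hrτ
  obtain ⟨h1, h2, h3, h4, h5⟩ := hr
  simp only at h1 h2 h3 h4 h5
  rw [← hg1d] at h2
  rw [← hg2d] at h4
  rw [← hg12d] at h5
  constructor
  · rintro ⟨hwa, hwb⟩
    have hwg : w * g12 ≤ g1 := (le_div_iff₀ hg12).mp hwb
    have h6 : g12 * (r₂ - g2) ≤ (g12 - g2) * r₂ - r₁ * g2 := by
      have e2 : 0 ≤ g2 * (g12 - r₁ - r₂) := mul_nonneg hg2.le (by linarith)
      nlinarith
    have key : (g1 - w * (g12 - g2)) * r₂ ≤ (g1 - w * r₁) * g2 := by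
      linarith [mul_le_mul_of_nonneg_left h6 hwa,
        mul_nonneg (sub_nonneg.mpr hwg) (sub_nonneg.mpr h4)]
    unfold D2
    rw [← hg1d]
    have hdiv : τ₂ * (g1 - w * (g12 - g2)) / (g1 * g2) ≤
        τ₂ * (g1 - w * r₁) / (g1 * r₂) := by
      rw [div_le_div_iff₀ (by positivity) (by positivity)]
      linarith [mul_le_mul_of_nonneg_left key (le_of_lt (mul_pos hτ₂ hg1))]
    linarith
  · rintro ⟨hwa, hwb⟩
    have hw0 : 0 ≤ w := le_trans (by positivity) hwa
    set c₁ := τ₁ / (τ₁ + τ₂) * g12 with hc₁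
    set c₂ := τ₂ / (τ₁ + τ₂) * g12 with hc₂
    have hc₂pos : 0 < c₂ := by positivity
    have hsum : c₁ + c₂ = g12 := by rw [hc₁, hc₂]; field_simp
    have hcross : 0 ≤ c₁ * r₂ - r₁ * c₂ := by
      have : c₁ * r₂ - r₁ * c₂ = (g12 / (τ₁ + τ₂)) * (τ₁ * r₂ - τ₂ * r₁) := by
        rw [hc₁, hc₂]; field_simp
      rw [this]
      apply mul_nonneg (by positivity) (by linarith)
    clear_value c₁ c₂
    have hwg : g1 ≤ w * g12 := (div_le_iff₀ hg12).mp hwa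
    have key : (g1 - w * c₁) * r₂ ≤ (g1 - w * r₁) * c₂ := by
      rcases le_or_gt r₂ c₂ with h | h
      · linarith [mul_nonneg hw0 hcross, mul_nonneg hg1.le (sub_nonneg.mpr h)]
      · have h6 : g12 * (r₂ - c₂) ≤ c₁ * r₂ - r₁ * c₂ := by
          have e : c₁ * r₂ - r₁ * c₂ - g12 * (r₂ - c₂) = c₂ * (g12 - r₁ - r₂) := by
            linear_combination r₂ * hsum
          have e2 : 0 ≤ c₂ * (g12 - r₁ - r₂) := mul_nonneg hc₂pos.le (by linarith)
          linarith
        linarith [mul_le_mul_of_nonneg_left h6 hw0,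
          mul_nonneg (sub_nonneg.mpr hwg) (sub_nonneg.mpr h.le)]
    unfold D2
    rw [← hg1d]
    have hdiv : τ₂ * (g1 - w * c₁) / (g1 * c₂) ≤ τ₂ * (g1 - w * r₁) / (g1 * r₂) := by
      rw [div_le_div_iff₀ (by positivity) (by positivity)]
      linarith [mul_le_mul_of_nonneg_left key (le_of_lt (mul_pos hτ₂ hg1))]
    linarith
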